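/- Let P and Q be noncommuting rank-one orthogonal projections on a d-dimensional Hilbert space, and define dichotomic observables A = (P, I−P) and B = (Q, I−Q). Set ρ_P = (I−P)/(d−1) and ρ_Q = (I−Q)/(d−1). Then there is no POVM G on {0,1}×{0,1} such that tr[ρ G(1,0)] + tr[ρ G(1,1)] = tr[ρ P] and tr[ρ G(0,1)] + tr[ρ G(1,1)] = tr[ρ Q] hold for both ρ = ρ_P and ρ = ρ_Q. -/

import Mathlib

open Matrix ComplexOrder

noncomputable section

def IsPOVM {ι : Type*} [Fintype ι] {n : Type*} [Fintype n] [DecidableEq n]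
    (G : ι → Matrix n n ℂ) : Prop :=
  (∀ i, (G i).PosSemidef) ∧ ∑ i, G i = 1

section Helpers

variable {n : Type*} [Fintype n] [DecidableEq n]

open scoped MatrixOrder in
lemma psd_exists_sqrt {A : Matrix n n ℂ} (hA : A.PosSemidef) :
    ∃ B : Matrix n n ℂ, B.PosSemidef ∧ B * B = A :=
  ⟨CFC.sqrt A, nonneg_iff_posSemidef.mp (CFC.sqrt_nonneg A),
    CFC.sqrt_mul_sqrt_self A (nonneg_iff_posSemidef.mpr hA)⟩

def Matrix.PosSemidef.sqrt {A : Matrix n n ℂ} (hA : A.PosSemidef) : Matrix n n ℂ :=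
  Classical.choose (psd_exists_sqrt hA)

lemma Matrix.PosSemidef.posSemidef_sqrt {A : Matrix n n ℂ} (hA : A.PosSemidef) :
    hA.sqrt.PosSemidef :=
  (Classical.choose_spec (psd_exists_sqrt hA)).1

lemma Matrix.PosSemidef.sqrt_mul_self {A : Matrix n n ℂ} (hA : A.PosSemidef) :
    hA.sqrt * hA.sqrt = A :=
  (Classical.choose_spec (psd_exists_sqrt hA)).2

lemma tr_chm_nonneg (A : Matrix n n ℂ) : 0 ≤ (Aᴴ * A).trace := by
  have h : (Aᴴ * A).trace = ∑ i, dotProduct (star (fun j => A j i)) (fun j => A j i) := by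
    simp [Matrix.trace, Matrix.diag, Matrix.mul_apply, dotProduct, Matrix.conjTranspose_apply]
  rw [h]
  exact Finset.sum_nonneg fun i _ => dotProduct_star_self_nonneg _

lemma tr_chm_zero {A : Matrix n n ℂ} (h0 : (Aᴴ * A).trace = 0) : A = 0 := by
  have h : (Aᴴ * A).trace = ∑ i, dotProduct (star (fun j => A j i)) (fun j => A j i) := by
    simp [Matrix.trace, Matrix.diag, Matrix.mul_apply, dotProduct, Matrix.conjTranspose_apply]
  rw [h] at h0
  have := (Finset.sum_eq_zero_iff_of_nonneg (fun i _ => dotProduct_star_self_nonneg _)).1 h0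
  ext i j
  have hj := dotProduct_star_self_eq_zero.1 (this j (Finset.mem_univ j))
  exact congrFun hj i

lemma psd_trace_nonneg {A : Matrix n n ℂ} (hA : A.PosSemidef) : 0 ≤ A.trace := by
  have : A = hA.sqrtᴴ * hA.sqrt := by
    rw [hA.posSemidef_sqrt.1, hA.sqrt_mul_self]
  rw [this]; exact tr_chm_nonneg _

lemma psd_mul_trace_nonneg {R G : Matrix n n ℂ} (hR : R.PosSemidef) (hG : G.PosSemidef) :
    0 ≤ (R * G).trace := by
  have key : (R * G).trace = ((hG.sqrt * hR.sqrt)ᴴ * (hG.sqrt * hR.sqrt)).trace := by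
    have h1 : (hG.sqrt * hR.sqrt)ᴴ * (hG.sqrt * hR.sqrt)
        = hR.sqrt * (hG.sqrt * hG.sqrt * hR.sqrt) := by
      rw [conjTranspose_mul, hR.posSemidef_sqrt.1, hG.posSemidef_sqrt.1]
      noncomm_ring
    rw [h1, trace_mul_comm, hG.sqrt_mul_self, trace_mul_comm hR.sqrt, mul_assoc, hR.sqrt_mul_self]
  rw [key]; exact tr_chm_nonneg _

lemma psd_mul_eq_zero {R G : Matrix n n ℂ} (hR : R.PosSemidef) (hG : G.PosSemidef)
    (h0 : (R * G).trace = 0) : R * G = 0 := by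
  have key : (R * G).trace = ((hG.sqrt * hR.sqrt)ᴴ * (hG.sqrt * hR.sqrt)).trace := by
    have h1 : (hG.sqrt * hR.sqrt)ᴴ * (hG.sqrt * hR.sqrt)
        = hR.sqrt * (hG.sqrt * hG.sqrt * hR.sqrt) := by
      rw [conjTranspose_mul, hR.posSemidef_sqrt.1, hG.posSemidef_sqrt.1]
      noncomm_ring
    rw [h1, trace_mul_comm, hG.sqrt_mul_self, trace_mul_comm hR.sqrt, mul_assoc, hR.sqrt_mul_self]
  have hz : hG.sqrt * hR.sqrt = 0 := tr_chm_zero (key ▸ h0)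
  have hz' : hR.sqrt * hG.sqrt = 0 := by
    have := congrArg conjTranspose hz
    rw [conjTranspose_mul, hR.posSemidef_sqrt.1.eq, hG.posSemidef_sqrt.1.eq,
      conjTranspose_zero] at this
    exact this
  calc R * G = hR.sqrt * (hR.sqrt * hG.sqrt) * hG.sqrt := by
        rw [← mul_assoc, hR.sqrt_mul_self, mul_assoc, hG.sqrt_mul_self]
    _ = 0 := by rw [hz', mul_zero, zero_mul]

lemma diag_single_conj (k : n) (N : Matrix n n ℂ) :
    diagonal (Pi.single k 1) * N * diagonal (Pi.single k 1)
      = N k k • diagonal (Pi.single k 1) := by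
  ext i j
  simp only [diagonal_mul, mul_diagonal, Matrix.smul_apply, diagonal_apply, smul_eq_mul]
  by_cases hi : i = k <;> by_cases hj : j = k
  · simp [hi, hj, Pi.single_apply]
  · have hkj : ¬ (k = j) := fun h => hj h.symm
    simp [hi, hj, hkj, Pi.single_apply]
  · have hki : ¬ (k = i) := fun h => hi h.symm
    simp [hi, hj, hki, Pi.single_apply]
  · simp [hi, hj, Pi.single_apply]

lemma trace_diag_single_mul (k : n) (N : Matrix n n ℂ) :
    (diagonal (Pi.single k 1) * N).trace = N k k := by
  simp [Matrix.trace, Matrix.diag, mul_apply, diagonal_apply, Pi.single_apply,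
    Finset.sum_ite_eq, Finset.mem_univ]

lemma rank_one_conj {P : Matrix n n ℂ} (hh : P.IsHermitian) (hp : P * P = P)
    (ht : P.trace = 1) (M : Matrix n n ℂ) : P * M * P = (P * M).trace • P := by
  set U : Matrix n n ℂ := (hh.eigenvectorUnitary : Matrix n n ℂ) with hU
  have hUU' : U * star U = 1 :=
    (Matrix.mem_unitaryGroup_iff).mp hh.eigenvectorUnitary.2
  set μ : n → ℝ := hh.eigenvalues with hμ
  have hdiag : star U * P * U = diagonal (RCLike.ofReal ∘ μ) := by
    have h := hh.conjStarAlgAut_star_eigenvectorUnitary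
    simp only [Unitary.conjStarAlgAut_apply, Unitary.coe_star, star_star] at h
    exact h
  have hsq : ∀ i, μ i * μ i = μ i := by
    intro i
    have h2 : diagonal ((RCLike.ofReal ∘ μ : n → ℂ)) * diagonal ((RCLike.ofReal ∘ μ : n → ℂ))
        = diagonal ((RCLike.ofReal ∘ μ : n → ℂ)) := by
      rw [← hdiag]
      calc (star U * P * U) * (star U * P * U)
          = star U * (P * (U * star U) * P) * U := by noncomm_ring
        _ = star U * P * U := by rw [hUU', mul_one, hp]
    rw [diagonal_mul_diagonal] at h2
    have h3 := congrFun (Matrix.diagonal_injective h2) i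
    have h4 : ((μ i : ℂ)) * (μ i : ℂ) = (μ i : ℂ) := by
      simpa using h3
    exact_mod_cast h4
  have h01 : ∀ i, μ i = 0 ∨ μ i = 1 := by
    intro i
    have hz : μ i * (μ i - 1) = 0 := by linear_combination hsq i
    rcases mul_eq_zero.mp hz with h | h
    · exact Or.inl h
    · exact Or.inr (by linarith)
  have hsum : ∑ i, μ i = 1 := by
    have h5 : (diagonal ((RCLike.ofReal ∘ μ : n → ℂ))).trace = P.trace := by
      rw [← hdiag, trace_mul_comm, ← mul_assoc, hUU', one_mul]
    rw [trace_diagonal, ht] at h5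
    have h6 : ((∑ i, μ i : ℝ) : ℂ) = 1 := by push_cast; simpa using h5
    exact_mod_cast h6
  have hcard : (Finset.univ.filter (fun i => μ i = 1)).card = 1 := by
    have : ∑ i, μ i = ((Finset.univ.filter (fun i => μ i = 1)).card : ℝ) := by
      rw [Finset.card_filter]
      push_cast
      apply Finset.sum_congr rfl
      intro i _
      rcases h01 i with h | h <;> simp [h]
    rw [hsum] at this
    exact_mod_cast this.symm
  obtain ⟨k, hk⟩ := Finset.card_eq_one.mp hcard
  have hμk : μ k = 1 := by
    have : k ∈ Finset.univ.filter (fun i => μ i = 1) := hk ▸ Finset.mem_singleton_self k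
    simpa using this
  have hμ0 : ∀ i, i ≠ k → μ i = 0 := by
    intro i hik
    rcases h01 i with h | h
    · exact h
    · exfalso
      have : i ∈ Finset.univ.filter (fun j => μ j = 1) := by simpa using h
      rw [hk, Finset.mem_singleton] at this
      exact hik this
  have hdiag1 : (RCLike.ofReal ∘ μ : n → ℂ) = Pi.single k 1 := by
    funext i
    by_cases hik : i = k
    · subst hik; simp [hμk]
    · simp [hμ0 i hik, Pi.single_apply, hik]
  set E : Matrix n n ℂ := diagonal (Pi.single k 1) with hE
  have hP : P = U * E * star U := by
    have := hh.spectral_theorem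
    rw [hdiag1] at this
    exact this
  set N : Matrix n n ℂ := star U * M * U with hN
  have key1 : P * M * P = N k k • P := by
    have h7 : P * M * P = U * (E * N * E) * star U := by
      rw [hP, hN]; noncomm_ring
    rw [h7, hE, diag_single_conj, Matrix.mul_smul, Matrix.smul_mul, ← hE, ← hP]
  have key2 : (P * M).trace = N k k := by
    rw [hP, trace_mul_cycle (U * E) (star U) M, trace_mul_cycle M (U * E) (star U),
      ← mul_assoc, trace_mul_comm (star U * M * U) E, hN, hE, trace_diag_single_mul]
  rw [key1, key2]

lemma proj_psd {P : Matrix n n ℂ} (hh : P.IsHermitian) (hp : P * P = P) : P.PosSemidef := by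
  have := posSemidef_conjTranspose_mul_self P
  rwa [hh.eq, hp] at this

lemma split_zero {a b : ℂ} (ha : 0 ≤ a) (hb : 0 ≤ b) (h : a + b = 0) : a = 0 ∧ b = 0 := by
  have h1 : a ≤ 0 := by
    rw [eq_neg_of_add_eq_zero_left h]
    exact neg_nonpos.mpr hb
  have ha0 : a = 0 := le_antisymm h1 ha
  refine ⟨ha0, ?_⟩
  rw [ha0, zero_add] at h
  exact h

lemma corner {R X : Matrix n n ℂ} (hR : R.IsHermitian) (hX : X.IsHermitian)
    (h : (1 - R) * X = 0) : R * X * R = X := by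
  have h1 : X = R * X := by
    rw [sub_mul, one_mul] at h
    exact sub_eq_zero.mp h
  have h2 : X * R = X := by
    have := congrArg conjTranspose h1
    rw [conjTranspose_mul, hR.eq, hX.eq] at this
    exact this.symm
  rw [← h1, h2]

end Helpers

/-- For noncommuting rank-one projections `P`, `Q` on a `d`-dimensional space, no POVM
`G` on `{0,1}×{0,1}` reproduces the outcome probabilities of `A = (P, I−P)` and
`B = (Q, I−Q)` on the two states `ρ_P = (I−P)/(d−1)` and `ρ_Q = (I−Q)/(d−1)`. -/
theorem rank_one_proj_two_state_incompatible {d : ℕ} (hd : 2 ≤ d)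
    (P Q : Matrix (Fin d) (Fin d) ℂ)
    (hPh : P.IsHermitian) (hPp : P * P = P) (hPr : P.trace = 1)
    (hQh : Q.IsHermitian) (hQp : Q * Q = Q) (hQr : Q.trace = 1)
    (hnc : P * Q ≠ Q * P) :
    ¬ ∃ G : Fin 2 × Fin 2 → Matrix (Fin d) (Fin d) ℂ, IsPOVM G ∧
      ∀ ρ ∈ ({((d : ℂ) - 1)⁻¹ • ((1 : Matrix (Fin d) (Fin d) ℂ) - P),
              ((d : ℂ) - 1)⁻¹ • ((1 : Matrix (Fin d) (Fin d) ℂ) - Q)} :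
              Set (Matrix (Fin d) (Fin d) ℂ)),
        (ρ * G (1, 0)).trace + (ρ * G (1, 1)).trace = (ρ * P).trace ∧
        (ρ * G (0, 1)).trace + (ρ * G (1, 1)).trace = (ρ * Q).trace := by
  rintro ⟨G, ⟨hGpsd, hGsum⟩, hyp⟩
  set c : ℂ := ((d : ℂ) - 1)⁻¹ with hcdef
  have hc : c ≠ 0 := by
    apply inv_ne_zero
    intro h
    have hd1 : (d : ℂ) = 1 := by linear_combination h
    have : d = 1 := by exact_mod_cast hd1
    omega
  have hconv : ∀ (R X : Matrix (Fin d) (Fin d) ℂ), ((c • R) * X).trace = c * (R * X).trace := by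
    intro R X
    rw [smul_mul_assoc, trace_smul, smul_eq_mul]
  obtain ⟨hP1a, hP1b⟩ := hyp _ (Set.mem_insert _ _)
  obtain ⟨hQ1a, hQ1b⟩ := hyp _ (Set.mem_insert_iff.mpr (Or.inr rfl))
  -- basic positivity
  have hPproj2 : (1 - P) * (1 - P) = 1 - P := by
    have : (1 - P) * (1 - P) = 1 - P - P + P * P := by noncomm_ring
    rw [this, hPp]; abel
  have hQproj2 : (1 - Q) * (1 - Q) = 1 - Q := by
    have : (1 - Q) * (1 - Q) = 1 - Q - Q + Q * Q := by noncomm_ring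
    rw [this, hQp]; abel
  have hRP : (1 - P : Matrix (Fin d) (Fin d) ℂ).PosSemidef :=
    proj_psd ((isHermitian_one).sub hPh) hPproj2
  have hRQ : (1 - Q : Matrix (Fin d) (Fin d) ℂ).PosSemidef :=
    proj_psd ((isHermitian_one).sub hQh) hQproj2
  -- equation E1 : tr((1-P)G10) + tr((1-P)G11) = 0
  have E1 : ((1 - P) * G (1, 0)).trace + ((1 - P) * G (1, 1)).trace = 0 := by
    rw [hconv, hconv, hconv] at hP1a
    have h' : c * (((1 - P) * G (1, 0)).trace + ((1 - P) * G (1, 1)).trace)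
        = c * ((1 - P) * P).trace := by rw [mul_add]; exact hP1a
    have h := mul_left_cancel₀ hc h'
    have hz : (1 - P) * P = 0 := by rw [sub_mul, one_mul, hPp, sub_self]
    rw [hz, trace_zero] at h
    exact h
  have E4 : ((1 - Q) * G (0, 1)).trace + ((1 - Q) * G (1, 1)).trace = 0 := by
    rw [hconv, hconv, hconv] at hQ1b
    have h' : c * (((1 - Q) * G (0, 1)).trace + ((1 - Q) * G (1, 1)).trace)
        = c * ((1 - Q) * Q).trace := by rw [mul_add]; exact hQ1b
    have h := mul_left_cancel₀ hc h'
    have hz : (1 - Q) * Q = 0 := by rw [sub_mul, one_mul, hQp, sub_self]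
    rw [hz, trace_zero] at h
    exact h
  have hs1 := split_zero (psd_mul_trace_nonneg hRP (hGpsd (1, 0)))
    (psd_mul_trace_nonneg hRP (hGpsd (1, 1))) E1
  have hs2 := split_zero (psd_mul_trace_nonneg hRQ (hGpsd (0, 1)))
    (psd_mul_trace_nonneg hRQ (hGpsd (1, 1))) E4
  have e10P : (1 - P) * G (1, 0) = 0 := psd_mul_eq_zero hRP (hGpsd (1, 0)) hs1.1
  have e11P : (1 - P) * G (1, 1) = 0 := psd_mul_eq_zero hRP (hGpsd (1, 1)) hs1.2
  have e01Q : (1 - Q) * G (0, 1) = 0 := psd_mul_eq_zero hRQ (hGpsd (0, 1)) hs2.1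
  have e11Q : (1 - Q) * G (1, 1) = 0 := psd_mul_eq_zero hRQ (hGpsd (1, 1)) hs2.2
  -- corner structure
  have hg10 : G (1, 0) = ((P * G (1, 0)).trace) • P := by
    rw [← rank_one_conj hPh hPp hPr, corner hPh (hGpsd (1, 0)).1 e10P]
  have hg11P : G (1, 1) = ((P * G (1, 1)).trace) • P := by
    rw [← rank_one_conj hPh hPp hPr, corner hPh (hGpsd (1, 1)).1 e11P]
  have hg11Q : G (1, 1) = ((Q * G (1, 1)).trace) • Q := by
    rw [← rank_one_conj hQh hQp hQr, corner hQh (hGpsd (1, 1)).1 e11Q]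
  have hg01 : G (0, 1) = ((Q * G (0, 1)).trace) • Q := by
    rw [← rank_one_conj hQh hQp hQr, corner hQh (hGpsd (0, 1)).1 e01Q]
  -- G(1,1) = 0
  set α : ℂ := (P * G (1, 1)).trace with hα
  set β : ℂ := (Q * G (1, 1)).trace with hβ
  have hab : α • P = β • Q := by rw [← hg11P, ← hg11Q]
  have habtr : α = β := by
    have := congrArg Matrix.trace hab
    rw [trace_smul, trace_smul, hPr, hQr] at this
    simpa using this
  have hα0 : α = 0 := by
    by_contra hne
    have hPQeq : P = Q := by
      calc P = α⁻¹ • (α • P) := by rw [smul_smul, inv_mul_cancel₀ hne, one_smul]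
        _ = α⁻¹ • (β • Q) := by rw [hab]
        _ = Q := by rw [← habtr, smul_smul, inv_mul_cancel₀ hne, one_smul]
    exact hnc (by rw [hPQeq])
  have hG11z : G (1, 1) = 0 := by rw [hg11P, hα0, zero_smul]
  -- overlap t
  set t : ℂ := (P * Q).trace with htdef
  have hPQP : P * Q * P = t • P := rank_one_conj hPh hPp hPr Q
  have hQPQ : Q * P * Q = t • Q := by
    have := rank_one_conj hQh hQp hQr P
    rwa [trace_mul_comm Q P, ← htdef] at this
  have ht1 : t ≠ 1 := by
    intro h1
    have hP'' : P * Q * P = P := by rw [hPQP, h1, one_smul]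
    have hXX : (P - P * Q) * (P - P * Q)ᴴ = 0 := by
      have hadj : (P - P * Q)ᴴ = P - Q * P := by
        rw [conjTranspose_sub, conjTranspose_mul, hPh.eq, hQh.eq]
      rw [hadj]
      have expand : (P - P * Q) * (P - Q * P)
          = P * P - P * (Q * P) - P * Q * P + P * Q * (Q * P) := by noncomm_ring
      rw [expand, hPp]
      have e1 : P * (Q * P) = P := by rw [← mul_assoc, hP'']
      have e2 : P * Q * (Q * P) = P := by
        rw [show P * Q * (Q * P) = P * (Q * Q) * P from by noncomm_ring, hQp, hP'']
      rw [e1, e2, hP'']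
      abel
    have hX0 : P - P * Q = 0 := self_mul_conjTranspose_eq_zero.mp hXX
    have hPQ : P * Q = P := (sub_eq_zero.mp hX0).symm
    have hQP : Q * P = P := by
      have := congrArg conjTranspose hPQ
      rwa [conjTranspose_mul, hPh.eq, hQh.eq] at this
    exact hnc (by rw [hPQ, hQP])
  have ht0 : t ≠ 0 := by
    intro h0
    have hz : P * Q * P = 0 := by rw [hPQP, h0, zero_smul]
    have h2 : (Q * P)ᴴ * (Q * P) = 0 := by
      rw [conjTranspose_mul, hPh.eq, hQh.eq]
      calc P * Q * (Q * P) = P * (Q * Q) * P := by noncomm_ring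
        _ = 0 := by rw [hQp, hz]
    have h3 : Q * P = 0 := conjTranspose_mul_self_eq_zero.mp h2
    have h4 : P * Q = 0 := by
      have := congrArg conjTranspose h3
      rwa [conjTranspose_mul, hPh.eq, hQh.eq, conjTranspose_zero] at this
    exact hnc (by rw [h3, h4])
  have htnn : 0 ≤ t := by
    have e : ((Q * P)ᴴ * (Q * P)).trace = t := by
      rw [conjTranspose_mul, hPh.eq, hQh.eq]
      rw [show P * Q * (Q * P) = P * (Q * Q) * P from by noncomm_ring, hQp]
      rw [trace_mul_cycle P Q P, hPp]
    rw [← e]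
    exact tr_chm_nonneg (Q * P)
  -- identify G(1,0) = P and G(0,1) = Q
  have h1t : (1 : ℂ) - t ≠ 0 := sub_ne_zero.mpr (Ne.symm ht1)
  have htrQP : ((1 - Q) * P).trace = 1 - t := by
    rw [sub_mul, one_mul, trace_sub, hPr, trace_mul_comm Q P, ← htdef]
  have htrPQ : ((1 - P) * Q).trace = 1 - t := by
    rw [sub_mul, one_mul, trace_sub, hQr, ← htdef]
  have hG10eq : G (1, 0) = P := by
    have E3 : ((1 - Q) * G (1, 0)).trace = ((1 - Q) * P).trace := by
      rw [hconv, hconv, hconv] at hQ1a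
      have h' : c * (((1 - Q) * G (1, 0)).trace + ((1 - Q) * G (1, 1)).trace)
          = c * ((1 - Q) * P).trace := by rw [mul_add]; exact hQ1a
      have h := mul_left_cancel₀ hc h'
      rw [hG11z, mul_zero, trace_zero, add_zero] at h
      exact h
    rw [hg10] at E3
    rw [Matrix.mul_smul, trace_smul, smul_eq_mul, htrQP] at E3
    have ha1 : (P * G (1, 0)).trace = 1 := by
      have h'' : (P * G (1, 0)).trace * (1 - t) = 1 * (1 - t) := by rw [one_mul]; exact E3
      exact mul_right_cancel₀ h1t h''
    rw [hg10, ha1, one_smul]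
  have hG01eq : G (0, 1) = Q := by
    have E2 : ((1 - P) * G (0, 1)).trace = ((1 - P) * Q).trace := by
      rw [hconv, hconv, hconv] at hP1b
      have h' : c * (((1 - P) * G (0, 1)).trace + ((1 - P) * G (1, 1)).trace)
          = c * ((1 - P) * Q).trace := by rw [mul_add]; exact hP1b
      have h := mul_left_cancel₀ hc h'
      rw [hG11z, mul_zero, trace_zero, add_zero] at h
      exact h
    rw [hg01] at E2
    rw [Matrix.mul_smul, trace_smul, smul_eq_mul, htrPQ] at E2
    have hb1 : (Q * G (0, 1)).trace = 1 := by
      have h'' : (Q * G (0, 1)).trace * (1 - t) = 1 * (1 - t) := by rw [one_mul]; exact E2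
      exact mul_right_cancel₀ h1t h''
    rw [hg01, hb1, one_smul]
  -- G(0,0) = 1 - P - Q
  have hsum4 : G (0, 0) + G (0, 1) + G (1, 0) + G (1, 1) = 1 := by
    rw [← hGsum]
    rw [Fintype.sum_prod_type, Fin.sum_univ_two]
    rw [Fin.sum_univ_two, Fin.sum_univ_two]
    abel
  have hG00 : G (0, 0) = 1 - P - Q := by
    rw [hG01eq, hG10eq, hG11z] at hsum4
    calc G (0, 0) = (G (0, 0) + Q + P + 0) - P - Q := by abel
      _ = 1 - P - Q := by rw [hsum4]
  have hpsd00 : (1 - P - Q : Matrix (Fin d) (Fin d) ℂ).PosSemidef := hG00 ▸ hGpsd (0, 0)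
  -- final contradiction
  have hXpsd := hpsd00.conjTranspose_mul_mul_same (Q * P)
  have htr : ((Q * P)ᴴ * (1 - P - Q) * (Q * P)).trace = -(t * t) := by
    rw [trace_mul_comm ((Q * P)ᴴ * (1 - P - Q)) (Q * P), ← mul_assoc]
    have hXXh : (Q * P) * (Q * P)ᴴ = t • Q := by
      rw [conjTranspose_mul, hPh.eq, hQh.eq]
      rw [show Q * P * (P * Q) = Q * (P * P) * Q from by noncomm_ring, hPp, hQPQ]
    rw [hXXh, Matrix.smul_mul, trace_smul, smul_eq_mul]
    have hQR : (Q * (1 - P - Q)).trace = -t := by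
      rw [mul_sub, mul_sub, mul_one, trace_sub, trace_sub, hQr, hQp, hQr,
        trace_mul_comm Q P, ← htdef]
      ring
    rw [hQR]
    ring
  have h0le := psd_trace_nonneg hXpsd
  rw [htr] at h0le
  -- pass to real parts
  have h1 := htnn
  rw [Complex.le_def] at h1 h0le
  have him : t.im = 0 := h1.2.symm
  have hre0 : 0 ≤ t.re := by simpa using h1.1
  have hrene : t.re ≠ 0 := by
    intro h
    exact ht0 (Complex.ext h him)
  have hre2 : 0 ≤ (-(t * t)).re := by simpa using h0le.1
  rw [Complex.neg_re, Complex.mul_re, him] at hre2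
  have hpos : 0 < t.re := lt_of_le_of_ne hre0 (Ne.symm hrene)
  nlinarith [mul_pos hpos hpos]
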